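/- Let 0 < θ < π/2, let g be as below and let w = g ∗ g. Then ∫_{0}^{∞} v · w(v) dv = (1/3) · csc θ · ( (15 − 12θ² + θ·(4θ² − 15)·cot θ) · csc θ + 3θ·sec θ ). -/

import Mathlib

open MeasureTheory

lemma hd_sin (A B x : ℝ) : HasDerivAt (fun v : ℝ => Real.sin (A * v - B)) (A * Real.cos (A * x - B)) x := by
  have h : HasDerivAt (fun v : ℝ => A * v - B) A x := by
    simpa using ((hasDerivAt_id x).const_mul A).sub_const B
  simpa [mul_comm, Function.comp_def] using (Real.hasDerivAt_sin (A * x - B)).comp x h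

lemma hd_cos (A B x : ℝ) : HasDerivAt (fun v : ℝ => Real.cos (A * v - B)) (-(A * Real.sin (A * x - B))) x := by
  have h : HasDerivAt (fun v : ℝ => A * v - B) A x := by
    simpa using ((hasDerivAt_id x).const_mul A).sub_const B
  simpa [mul_comm, Function.comp_def] using (Real.hasDerivAt_cos (A * x - B)).comp x h

lemma hd_sin' (A B x : ℝ) : HasDerivAt (fun v : ℝ => Real.sin (B - A * v)) (-(A * Real.cos (B - A * x))) x := by
  have h : HasDerivAt (fun v : ℝ => B - A * v) (-A) x := by
    simpa using (((hasDerivAt_id x).const_mul A).const_sub B)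
  simpa [mul_comm, Function.comp_def] using (Real.hasDerivAt_sin (B - A * x)).comp x h

lemma hd_cos' (A B x : ℝ) : HasDerivAt (fun v : ℝ => Real.cos (B - A * v)) (A * Real.sin (B - A * x)) x := by
  have h : HasDerivAt (fun v : ℝ => B - A * v) (-A) x := by
    simpa using (((hasDerivAt_id x).const_mul A).const_sub B)
  simpa [mul_comm, Function.comp_def] using (Real.hasDerivAt_cos (B - A * x)).comp x h

lemma hd_sin0 (A x : ℝ) : HasDerivAt (fun v : ℝ => Real.sin (A * v)) (A * Real.cos (A * x)) x := by
  simpa using hd_sin A 0 x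

lemma hd_cos0 (A x : ℝ) : HasDerivAt (fun v : ℝ => Real.cos (A * v)) (-(A * Real.sin (A * x))) x := by
  simpa using hd_cos A 0 x

lemma F_hasDeriv (c k v x : ℝ) (hc : c ≠ 0) :
    HasDerivAt (fun x : ℝ => (Real.cos (c*v)/2 + k^2) * x + Real.sin (2*c*x - c*v)/(4*c)
      - (k/c) * Real.sin (c*x) + (k/c) * Real.sin (c*v - c*x))
    ((Real.cos (c*x) - k) * (Real.cos (c*v - c*x) - k)) x := by
  have h1 : HasDerivAt (fun x : ℝ => (Real.cos (c*v)/2 + k^2) * x) (Real.cos (c*v)/2 + k^2) x := by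
    simpa using (hasDerivAt_id x).const_mul (Real.cos (c*v)/2 + k^2)
  have h2 := ((hd_sin (2*c) (c*v) x).div_const (4*c)).congr_deriv
    (show 2*c*Real.cos (2*c*x - c*v)/(4*c) = Real.cos (2*c*x - c*v)/2 by
      field_simp; ring)
  have h3 := ((hd_sin0 c x).const_mul (k/c)).congr_deriv
    (show (k/c)*(c*Real.cos (c*x)) = k*Real.cos (c*x) by field_simp)
  have h4 := ((hd_sin' c (c*v) x).const_mul (k/c)).congr_deriv
    (show (k/c)*(-(c*Real.cos (c*v - c*x))) = -(k*Real.cos (c*v - c*x)) by field_simp)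
  have H := ((h1.add h2).sub h3).add h4
  refine H.congr_deriv ?_
  have h5 := Real.cos_add (c*x) (c*v - c*x)
  have h6 := Real.cos_sub (c*x) (c*v - c*x)
  rw [show c*x + (c*v - c*x) = c*v by ring] at h5
  rw [show c*x - (c*v - c*x) = 2*c*x - c*v by ring] at h6
  linear_combination (h5 + h6)/2

lemma H_hasDeriv (c k θ a sθ : ℝ) (hc : c ≠ 0) (v : ℝ) :
    HasDerivAt (fun v : ℝ =>
      a*(v*Real.sin (c*v)/c + Real.cos (c*v)/c^2)
      - (v^2*Real.sin (c*v)/c + 2*(v*Real.cos (c*v))/c^2 - 2*Real.sin (c*v)/c^3)/2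
      + a*k^2*v^2 - k^2*v^3/3
      + (v*Real.cos (2*θ - c*v)/c + Real.sin (2*θ - c*v)/c^2)/(2*c)
      + (2*k/c)*(-(v*Real.cos (c*v - θ))/c + Real.sin (c*v - θ)/c^2)
      - (k*sθ/c)*v^2)
    (v * ((2*a - v)*(Real.cos (c*v)/2 + k^2) + Real.sin (2*θ - c*v)/(2*c)
      + (2*k/c)*(Real.sin (c*v - θ) - sθ))) v := by
  have hsv := hd_sin0 c v
  have hcv := hd_cos0 c v
  have hs2 := hd_sin' c (2*θ) v
  have hc2 := hd_cos' c (2*θ) v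
  have hst := hd_sin c θ v
  have hct := hd_cos c θ v
  have hid : HasDerivAt (fun v : ℝ => v) 1 v := hasDerivAt_id v
  have hp2 : HasDerivAt (fun v : ℝ => v^2) (2*v) v := by simpa using hasDerivAt_pow 2 v
  have hp3 : HasDerivAt (fun v : ℝ => v^3) (3*v^2) v := by simpa using hasDerivAt_pow 3 v
  have t1 : HasDerivAt (fun v : ℝ => v*Real.sin (c*v)/c) ((1*Real.sin (c*v) + v*(c*Real.cos (c*v)))/c) v :=
    (hid.mul hsv).div_const c
  have t2 : HasDerivAt (fun v : ℝ => Real.cos (c*v)/c^2) ((-(c*Real.sin (c*v)))/c^2) v := hcv.div_const _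
  have t3 : HasDerivAt (fun v : ℝ => v^2*Real.sin (c*v)/c) ((2*v*Real.sin (c*v) + v^2*(c*Real.cos (c*v)))/c) v :=
    (hp2.mul hsv).div_const c
  have t4 : HasDerivAt (fun v : ℝ => 2*(v*Real.cos (c*v))/c^2)
      ((2*(1*Real.cos (c*v) + v*(-(c*Real.sin (c*v)))))/c^2) v :=
    ((hid.mul hcv).const_mul 2).div_const (c^2)
  have t5 : HasDerivAt (fun v : ℝ => 2*Real.sin (c*v)/c^3) ((2*(c*Real.cos (c*v)))/c^3) v :=
    (hsv.const_mul 2).div_const (c^3)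
  have t6 : HasDerivAt (fun v : ℝ => a*k^2*v^2) (a*k^2*(2*v)) v := hp2.const_mul _
  have t7 : HasDerivAt (fun v : ℝ => k^2*v^3/3) (k^2*(3*v^2)/3) v := (hp3.const_mul _).div_const 3
  have t8 : HasDerivAt (fun v : ℝ => v*Real.cos (2*θ - c*v)/c)
      ((1*Real.cos (2*θ - c*v) + v*(c*Real.sin (2*θ - c*v)))/c) v := (hid.mul hc2).div_const c
  have t9 : HasDerivAt (fun v : ℝ => Real.sin (2*θ - c*v)/c^2) ((-(c*Real.cos (2*θ - c*v)))/c^2) v :=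
    hs2.div_const _
  have t10 : HasDerivAt (fun v : ℝ => -(v*Real.cos (c*v - θ))/c)
      ((-(1*Real.cos (c*v - θ) + v*(-(c*Real.sin (c*v - θ)))))/c) v := ((hid.mul hct).neg).div_const c
  have t11 : HasDerivAt (fun v : ℝ => Real.sin (c*v - θ)/c^2) ((c*Real.cos (c*v - θ))/c^2) v :=
    hst.div_const _
  have t12 : HasDerivAt (fun v : ℝ => (k*sθ/c)*v^2) ((k*sθ/c)*(2*v)) v := hp2.const_mul _
  have H := (((((((t1.add t2).const_mul a).sub (((t3.add t4).sub t5).div_const 2)).add t6).sub t7).add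
      (((t8.add t9)).div_const (2*c))).add ((t10.add t11).const_mul (2*k/c))).sub t12
  exact H.congr_deriv (by field_simp; ring)


set_option maxHeartbeats 1000000 in
theorem stmt_12 (θ : ℝ) (hθ₁ : 0 < θ) (hθ₂ : θ < Real.pi / 2)
    (g w : ℝ → ℝ)
    (hg : ∀ u : ℝ, g u =
      if |u| < θ * Real.cot θ then
        (Real.cos (u * Real.tan θ) - Real.cos θ) * (1 / Real.cos θ ^ 2)
      else 0)
    (hw : ∀ u : ℝ, w u = ∫ v : ℝ, g v * g (u - v)) :
    ∫ v in Set.Ioi (0 : ℝ), v * w v =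
      (1 / 3) * (1 / Real.sin θ) *
        ((15 - 12 * θ ^ 2 + θ * (4 * θ ^ 2 - 15) * Real.cot θ) * (1 / Real.sin θ) +
          3 * θ * (1 / Real.cos θ)) := by
  have hk : 0 < Real.cos θ := Real.cos_pos_of_mem_Ioo ⟨by linarith [Real.pi_pos], hθ₂⟩
  have hs : 0 < Real.sin θ := Real.sin_pos_of_pos_of_lt_pi hθ₁ (by linarith [Real.pi_pos])
  have hc : 0 < Real.tan θ := by
    rw [Real.tan_eq_sin_div_cos]; positivity
  have ha : 0 < (θ * Real.cot θ) := by
    have : Real.cot θ = Real.cos θ / Real.sin θ := Real.cot_eq_cos_div_sin θ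
    rw [this]; positivity
  have hca : Real.tan θ * (θ * Real.cot θ) = θ := by
    rw [Real.tan_eq_sin_div_cos, Real.cot_eq_cos_div_sin]
    field_simp
  have hg' : ∀ u : ℝ, g u = if |u| < (θ * Real.cot θ) then (Real.cos (Real.tan θ*u) - Real.cos θ) * (1 / Real.cos θ ^ 2) else 0 := by
    intro u; rw [hg u, mul_comm u (Real.tan θ)]
  have hzero : ∀ v : ℝ, 2*(θ * Real.cot θ) ≤ v → w v = 0 := by
    intro v hv
    rw [hw v]
    have hz : ∀ x : ℝ, g x * g (v - x) = 0 := by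
      intro x
      by_cases hx : |x| < (θ * Real.cot θ)
      · have hx2 := (abs_lt.mp hx).2
        have h2 : ¬ |v - x| < (θ * Real.cot θ) := by
          rw [abs_lt]; push_neg; intro h; linarith
        rw [hg' (v - x), if_neg h2, mul_zero]
      · rw [hg' x, if_neg hx, zero_mul]
    simp only [hz, integral_zero]
  have hwf : ∀ v ∈ Set.Ioc (0:ℝ) (2*(θ * Real.cot θ)), w v = (1 / Real.cos θ ^ 2)^2 * ((fun v : ℝ => (2*(θ * Real.cot θ) - v)*(Real.cos (Real.tan θ*v)/2 + Real.cos θ^2) + Real.sin (2*θ - Real.tan θ*v)/(2*Real.tan θ) + (2*Real.cos θ/Real.tan θ)*(Real.sin (Real.tan θ*v - θ) - Real.sin θ)) v) := by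
    rintro v ⟨hv0, hv2⟩
    have hind : ∀ x : ℝ, g x * g (v - x) =
        Set.indicator (Set.Ioo (v - (θ * Real.cot θ)) (θ * Real.cot θ))
          (fun x => ((Real.cos (Real.tan θ*x) - Real.cos θ) * (Real.cos (Real.tan θ*v - Real.tan θ*x) - Real.cos θ)) * (1 / Real.cos θ ^ 2)^2) x := by
      intro x
      by_cases hx : x ∈ Set.Ioo (v - (θ * Real.cot θ)) (θ * Real.cot θ)
      · rw [Set.indicator_of_mem hx]
        obtain ⟨hx1, hx2⟩ := hx
        have h1 : |x| < (θ * Real.cot θ) := abs_lt.mpr ⟨by linarith, hx2⟩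
        have h2 : |v - x| < (θ * Real.cot θ) := abs_lt.mpr ⟨by linarith, by linarith⟩
        rw [hg' x, hg' (v - x), if_pos h1, if_pos h2,
          show Real.tan θ*(v - x) = Real.tan θ*v - Real.tan θ*x by ring]
        ring
      · rw [Set.indicator_of_notMem hx]
        rw [Set.mem_Ioo] at hx; push_neg at hx
        by_cases hx1 : v - (θ * Real.cot θ) < x
        · have hx2 := hx hx1
          rw [hg' x, if_neg (by rw [abs_lt]; push_neg; intro h; linarith), zero_mul]
        · push_neg at hx1
          have h2 : ¬ |v - x| < (θ * Real.cot θ) := by rw [abs_lt]; push_neg; intro h; linarith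
          rw [hg' (v - x), if_neg h2, mul_zero]
    rw [hw v]
    rw [show (fun x => g x * g (v - x)) = fun x => Set.indicator (Set.Ioo (v - (θ * Real.cot θ)) (θ * Real.cot θ))
          (fun x => ((Real.cos (Real.tan θ*x) - Real.cos θ) * (Real.cos (Real.tan θ*v - Real.tan θ*x) - Real.cos θ)) * (1 / Real.cos θ ^ 2)^2) x
        from funext hind]
    rw [integral_indicator measurableSet_Ioo, ← integral_Ioc_eq_integral_Ioo,
      ← intervalIntegral.integral_of_le (by linarith : v - (θ * Real.cot θ) ≤ (θ * Real.cot θ)),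
      intervalIntegral.integral_mul_const]
    rw [intervalIntegral.integral_eq_sub_of_hasDerivAt
        (f := fun x : ℝ => (Real.cos (Real.tan θ*v)/2 + Real.cos θ^2) * (x) + Real.sin (2*Real.tan θ*(x) - Real.tan θ*v)/(4*Real.tan θ) - (Real.cos θ/Real.tan θ) * Real.sin (Real.tan θ*(x)) + (Real.cos θ/Real.tan θ) * Real.sin (Real.tan θ*v - Real.tan θ*(x)))
        (fun x _ => F_hasDeriv (Real.tan θ) (Real.cos θ) v x hc.ne')
        (Continuous.intervalIntegrable (by fun_prop) _ _)]
    rw [show 2*Real.tan θ*((θ * Real.cot θ)) - Real.tan θ*v = 2*θ - Real.tan θ*v by linear_combination 2*hca,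
      show 2*Real.tan θ*(v - (θ * Real.cot θ)) - Real.tan θ*v = -(2*θ - Real.tan θ*v) by linear_combination (-2)*hca,
      show Real.tan θ*v - Real.tan θ*(v - (θ * Real.cot θ)) = θ by linear_combination hca,
      show Real.tan θ*(v - (θ * Real.cot θ)) = Real.tan θ*v - θ by linear_combination -hca,
      show Real.tan θ*v - Real.tan θ*((θ * Real.cot θ)) = Real.tan θ*v - θ by linear_combination -hca,
      show Real.tan θ*((θ * Real.cot θ)) = θ from hca, Real.sin_neg]
    ring
  have hcontW : Continuous (fun v : ℝ => (1 / Real.cos θ ^ 2)^2 * (v * ((fun v : ℝ => (2*(θ * Real.cot θ) - v)*(Real.cos (Real.tan θ*v)/2 + Real.cos θ^2) + Real.sin (2*θ - Real.tan θ*v)/(2*Real.tan θ) + (2*Real.cos θ/Real.tan θ)*(Real.sin (Real.tan θ*v - θ) - Real.sin θ)) v))) := by fun_prop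
  have hIocEq : Set.EqOn (fun v : ℝ => v * w v) (fun v : ℝ => (1 / Real.cos θ ^ 2)^2 * (v * ((fun v : ℝ => (2*(θ * Real.cot θ) - v)*(Real.cos (Real.tan θ*v)/2 + Real.cos θ^2) + Real.sin (2*θ - Real.tan θ*v)/(2*Real.tan θ) + (2*Real.cos θ/Real.tan θ)*(Real.sin (Real.tan θ*v - θ) - Real.sin θ)) v)))
      (Set.Ioc (0:ℝ) (2*(θ * Real.cot θ))) := by
    intro v hv
    simp only
    rw [hwf v hv]; ring
  have hEq2 : Set.EqOn (fun v : ℝ => v * w v) (fun _ => (0:ℝ)) (Set.Ioi (2*(θ * Real.cot θ))) := by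
    intro v hv
    simp only
    rw [hzero v (le_of_lt hv), mul_zero]
  have hint1 : IntegrableOn (fun v : ℝ => v * w v) (Set.Ioc (0:ℝ) (2*(θ * Real.cot θ))) :=
    (hcontW.integrableOn_Ioc).congr_fun hIocEq.symm measurableSet_Ioc
  have hint2 : IntegrableOn (fun v : ℝ => v * w v) (Set.Ioi (2*(θ * Real.cot θ))) :=
    (integrableOn_zero).congr_fun hEq2.symm measurableSet_Ioi
  rw [show Set.Ioi (0:ℝ) = Set.Ioc 0 (2*(θ * Real.cot θ)) ∪ Set.Ioi (2*(θ * Real.cot θ)) from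
      (Set.Ioc_union_Ioi_eq_Ioi (by linarith)).symm,
    setIntegral_union (Set.Ioc_disjoint_Ioi le_rfl) measurableSet_Ioi hint1 hint2]
  rw [setIntegral_congr_fun measurableSet_Ioi hEq2, integral_zero, add_zero]
  rw [setIntegral_congr_fun measurableSet_Ioc hIocEq,
    ← intervalIntegral.integral_of_le (by linarith : (0:ℝ) ≤ 2*(θ * Real.cot θ))]
  rw [intervalIntegral.integral_eq_sub_of_hasDerivAt
      (f := fun v : ℝ => (1 / Real.cos θ ^ 2)^2 * ((fun v : ℝ =>
      (θ * Real.cot θ)*(v*Real.sin (Real.tan θ*v)/Real.tan θ + Real.cos (Real.tan θ*v)/Real.tan θ^2)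
      - (v^2*Real.sin (Real.tan θ*v)/Real.tan θ + 2*(v*Real.cos (Real.tan θ*v))/Real.tan θ^2 - 2*Real.sin (Real.tan θ*v)/Real.tan θ^3)/2
      + (θ * Real.cot θ)*Real.cos θ^2*v^2 - Real.cos θ^2*v^3/3
      + (v*Real.cos (2*θ - Real.tan θ*v)/Real.tan θ + Real.sin (2*θ - Real.tan θ*v)/Real.tan θ^2)/(2*Real.tan θ)
      + (2*Real.cos θ/Real.tan θ)*(-(v*Real.cos (Real.tan θ*v - θ))/Real.tan θ + Real.sin (Real.tan θ*v - θ)/Real.tan θ^2)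
      - (Real.cos θ*Real.sin θ/Real.tan θ)*v^2) v))
      (fun v _ => (H_hasDeriv (Real.tan θ) (Real.cos θ) θ ((θ * Real.cot θ)) (Real.sin θ) hc.ne' v).const_mul ((1 / Real.cos θ ^ 2)^2))
      (hcontW.intervalIntegrable _ _)]
  simp only
  rw [show 2*θ - Real.tan θ*(2*(θ * Real.cot θ)) = 0 by linear_combination (-2)*hca,
    show Real.tan θ*(2*(θ * Real.cot θ)) - θ = θ by linear_combination 2*hca,
    show Real.tan θ*(2*(θ * Real.cot θ)) = 2*θ by linear_combination 2*hca,
    show Real.tan θ*(0:ℝ) - θ = -θ by ring,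
    show 2*θ - Real.tan θ*(0:ℝ) = 2*θ by ring,
    show Real.tan θ*(0:ℝ) = 0 by ring]
  simp only [Real.sin_two_mul, Real.cos_two_mul, Real.sin_zero, Real.cos_zero,
    Real.sin_neg, Real.cos_neg]
  rw [Real.tan_eq_sin_div_cos, Real.cot_eq_cos_div_sin]
  have hpy := Real.sin_sq_add_cos_sq θ
  field_simp
  linear_combination (-6*θ*Real.cos θ^2) * hpy
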